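/- For each $k \geq 0$, let $S(k)$ be the Arf closure of the numerical semigroup generated by $\{2^k,\ 2^k + 2^{k-1},\ \ldots,\ 2^k + 2^{k-1} + \cdots + 2 + 1\}$ (i.e., by $2^{k+1} - 2^{k-i}$ for $0 \leq i \leq k$, where the last generator is $2^{k+1}-1$). Then the minimal Arf system of generators of $S(k)$ has exactly $k+1$ elements, i.e., $\mathrm{Arfrank}(S(k)) = k+1$. -/

import Mathlib

/-- A numerical semigroup: an additive submonoid of ℕ with finite complement. -/
def IsNumericalSemigroup (S : Set ℕ) : Prop :=
  0 ∈ S ∧ (∀ a ∈ S, ∀ b ∈ S, a + b ∈ S) ∧ Sᶜ.Finite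

/-- `S` is Arf: for every `s ∈ S`, the set `{n - s : n ∈ S, n ≥ s}` is closed under
addition, i.e. for all `x, y ∈ S` with `x, y ≥ s` one has `x + y - s ∈ S`. -/
def IsArfNS (S : Set ℕ) : Prop :=
  ∀ s ∈ S, ∀ x ∈ S, ∀ y ∈ S, s ≤ x → s ≤ y → x + y - s ∈ S

/-- The Arf closure of a set `A ⊆ ℕ`: the intersection of all Arf numerical
semigroups containing `A`. -/
def ArfClosure (A : Set ℕ) : Set ℕ :=
  ⋂₀ {T | IsNumericalSemigroup T ∧ IsArfNS T ∧ A ⊆ T}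

/-- The auxiliary family: multiples of `d` together with everything `≥ M`. -/
def VsAux (d M : ℕ) : Set ℕ := {n | d ∣ n ∨ M ≤ n}

lemma VsAux_ns (d M : ℕ) : IsNumericalSemigroup (VsAux d M) := by
  refine ⟨Or.inl (dvd_zero d), ?_, ?_⟩
  · rintro a (ha | ha) b (hb | hb)
    · exact Or.inl (Nat.dvd_add ha hb)
    · exact Or.inr (by omega)
    · exact Or.inr (by omega)
    · exact Or.inr (by omega)
  · apply Set.Finite.subset (Set.finite_Iio M)
    intro n hn
    simp only [Set.mem_compl_iff, VsAux, Set.mem_setOf_eq, not_or, not_le] at hn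
    exact hn.2

lemma VsAux_arf (d M : ℕ) : IsArfNS (VsAux d M) := by
  rintro s hs x hx y hy hsx hsy
  rcases hx with hx | hx
  · rcases hy with hy | hy
    · rcases hs with hs | hs
      · exact Or.inl (Nat.dvd_sub (Nat.dvd_add hx hy) hs)
      · -- M ≤ s ≤ x, and x is a multiple of d; either way x + y - s ≥ x ≥ M
        exact Or.inr (by omega)
    · exact Or.inr (by omega)
  · exact Or.inr (by omega)

lemma subset_arfClosure (A : Set ℕ) : A ⊆ ArfClosure A := by
  intro a ha T hT
  exact hT.2.2 ha

lemma arfClosure_subset {A T : Set ℕ} (h1 : IsNumericalSemigroup T) (h2 : IsArfNS T)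
    (h3 : A ⊆ T) : ArfClosure A ⊆ T :=
  Set.sInter_subset_of_mem ⟨h1, h2, h3⟩

/-- `2^(k-i+1)` does not divide `2^(k+1) - 2^(k-i)` when `i ≤ k`. -/
lemma not_dvd_g {k i : ℕ} (hi : i ≤ k) :
    ¬ 2 ^ (k - i + 1) ∣ 2 ^ (k + 1) - 2 ^ (k - i) := by
  rintro ⟨c, hc⟩
  have h1 : 2 ^ (k - i) ≤ 2 ^ (k + 1) := Nat.pow_le_pow_right (by norm_num) (by omega)
  have h2 : 2 ^ (k + 1) = 2 ^ (k - i) * 2 ^ (i + 1) := by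
    rw [← pow_add]; congr 1; omega
  have h3 : 2 ^ (k - i + 1) = 2 ^ (k - i) * 2 := by rw [pow_succ]
  have h4 : 2 ^ (i + 1) = 2 * 2 ^ i := by rw [pow_succ]; ring
  have hpos : 0 < 2 ^ (k - i) := Nat.pow_pos (by norm_num)
  rw [h3, mul_assoc] at hc
  rw [h4] at h2
  -- hc : 2^(k+1) - 2^(k-i) = 2^(k-i) * (2 * c)
  have h5 : 2 ^ (k - i) * (2 * 2 ^ i) = 2 ^ (k - i) * (2 * c + 1) := by
    rw [Nat.mul_add, Nat.mul_one]
    omega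
  have h6 : 2 * 2 ^ i = 2 * c + 1 := Nat.eq_of_mul_eq_mul_left hpos h5
  omega

lemma dvd_g {k i j : ℕ} (hi : i ≤ k) (hj : j ≤ i) :
    2 ^ (k - i) ∣ 2 ^ (k + 1) - 2 ^ (k - j) :=
  Nat.dvd_sub (pow_dvd_pow 2 (by omega)) (pow_dvd_pow 2 (by omega))

lemma g_mono {k i j : ℕ} (hj : j ≤ k) (hij : i ≤ j) :
    2 ^ (k + 1) - 2 ^ (k - i) ≤ 2 ^ (k + 1) - 2 ^ (k - j) := by
  have h1 : 2 ^ (k - j) ≤ 2 ^ (k - i) := Nat.pow_le_pow_right (by norm_num) (by omega)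
  omega

theorem arfrank_of_Sk (k : ℕ) :
    (∃ A : Finset ℕ,
        ArfClosure ↑A = ArfClosure {n | ∃ i ≤ k, n = 2 ^ (k + 1) - 2 ^ (k - i)} ∧
        A.card = k + 1) ∧
    ∀ A : Finset ℕ,
      ArfClosure ↑A = ArfClosure {n | ∃ i ≤ k, n = 2 ^ (k + 1) - 2 ^ (k - i)} →
      k + 1 ≤ A.card := by
  set G : Set ℕ := {n | ∃ i ≤ k, n = 2 ^ (k + 1) - 2 ^ (k - i)} with hG
  constructor
  · -- existence: take the image of the generators
    refine ⟨(Finset.range (k + 1)).image (fun i => 2 ^ (k + 1) - 2 ^ (k - i)), ?_, ?_⟩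
    · have hcoe : (↑((Finset.range (k + 1)).image (fun i => 2 ^ (k + 1) - 2 ^ (k - i))) : Set ℕ)
          = G := by
        ext n
        simp only [Finset.coe_image, Finset.coe_range, Set.mem_image, Set.mem_Iio,
          hG, Set.mem_setOf_eq]
        constructor
        · rintro ⟨i, hi, rfl⟩; exact ⟨i, by omega, rfl⟩
        · rintro ⟨i, hi, rfl⟩; exact ⟨i, by omega, rfl⟩
      rw [hcoe]
    · rw [Finset.card_image_of_injOn, Finset.card_range]
      intro i hi j hj hij
      simp only [Finset.coe_range, Set.mem_Iio] at hi hj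
      have hij' : 2 ^ (k + 1) - 2 ^ (k - i) = 2 ^ (k + 1) - 2 ^ (k - j) := hij
      have h1 : 2 ^ (k - i) ≤ 2 ^ (k + 1) := Nat.pow_le_pow_right (by norm_num) (by omega)
      have h2 : 2 ^ (k - j) ≤ 2 ^ (k + 1) := Nat.pow_le_pow_right (by norm_num) (by omega)
      have h3 : 2 ^ (k - i) = 2 ^ (k - j) := by omega
      have h4 : k - i = k - j := Nat.pow_right_injective (le_refl 2) h3
      omega
  · -- lower bound
    intro A hA
    have key : ∀ i, ∃ a, i ≤ k → a ∈ A ∧ 2 ^ (k - i) ∣ a ∧ ¬ 2 ^ (k - i + 1) ∣ a := by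
      intro i
      by_cases hi : i ≤ k
      swap
      · exact ⟨0, fun h => absurd h hi⟩
      -- the semigroup T_i misses g i, so A ⊄ T_i
      have hgiG : 2 ^ (k + 1) - 2 ^ (k - i) ∈ G := ⟨i, hi, rfl⟩
      have hgiS : 2 ^ (k + 1) - 2 ^ (k - i) ∈ ArfClosure (↑A : Set ℕ) := by
        rw [hA]; exact subset_arfClosure G hgiG
      have hnsub : ¬ (↑A : Set ℕ) ⊆ VsAux (2 ^ (k - i + 1)) (2 ^ (k + 1) - 2 ^ (k - i) + 1) := by
        intro hsub
        have h1 := arfClosure_subset (VsAux_ns _ _) (VsAux_arf _ _) hsub hgiS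
        rcases h1 with h1 | h1
        · exact not_dvd_g hi h1
        · omega
      rw [Set.not_subset] at hnsub
      obtain ⟨a, haA, haT⟩ := hnsub
      simp only [VsAux, Set.mem_setOf_eq, not_or, not_le] at haT
      obtain ⟨hnd, hle⟩ := haT
      -- a is in the upper-bound semigroup U_i = multiples of 2^(k-i) ∪ [g i, ∞)
      have hGU : G ⊆ VsAux (2 ^ (k - i)) (2 ^ (k + 1) - 2 ^ (k - i)) := by
        rintro n ⟨j, hj, rfl⟩
        by_cases hji : j ≤ i
        · exact Or.inl (dvd_g hi hji)
        · exact Or.inr (g_mono hj (by omega))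
      have haU : a ∈ VsAux (2 ^ (k - i)) (2 ^ (k + 1) - 2 ^ (k - i)) := by
        have h1 : a ∈ ArfClosure (↑A : Set ℕ) := subset_arfClosure _ haA
        rw [hA] at h1
        exact arfClosure_subset (VsAux_ns _ _) (VsAux_arf _ _) hGU h1
      rcases haU with hd | hge
      · exact ⟨a, fun _ => ⟨haA, hd, fun h => hnd h⟩⟩
      · -- then a = g i, which is divisible by 2^(k-i)
        have ha : a = 2 ^ (k + 1) - 2 ^ (k - i) := by omega
        refine ⟨a, fun _ => ⟨haA, ?_, fun h => hnd h⟩⟩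
        rw [ha]; exact dvd_g hi le_rfl
    choose f hf using key
    have hinj : Set.InjOn f ↑(Finset.range (k + 1)) := by
      have aux : ∀ i j, i ≤ k → j ≤ k → i < j → f i ≠ f j := by
        intro i j hi hj hij heq
        obtain ⟨_, hdi, _⟩ := hf i hi
        obtain ⟨_, _, hndj⟩ := hf j hj
        apply hndj
        rw [← heq] at *
        exact dvd_trans (pow_dvd_pow 2 (by omega)) hdi
      intro i hi j hj heq
      simp only [Finset.coe_range, Set.mem_Iio] at hi hj
      rcases lt_trichotomy i j with h | h | h
      · exact absurd heq (aux i j (by omega) (by omega) h)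
      · exact h
      · exact absurd heq.symm (aux j i (by omega) (by omega) h)
    have hmaps : ∀ i ∈ Finset.range (k + 1), f i ∈ A := by
      intro i hi
      simp only [Finset.mem_range] at hi
      exact (hf i (by omega)).1
    calc k + 1 = (Finset.range (k + 1)).card := (Finset.card_range _).symm
      _ ≤ A.card := Finset.card_le_card_of_injOn f hmaps hinj
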